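/- arXiv:1408.2164 — 5 statements merged into one kernel-verified Lean document; each statement's English description precedes it below -/
import Mathlib

section
/- Let a, b ≥ 0 with a + b > 2 and a = 2 (with b arbitrary satisfying the constraints). Then there exists a constant C > 0 such that for all x ∈ ℝ², ∫_{ℝ²} (1+|y|)^{-a} (1+|x−y|)^{-b} dy ≤ C ( (1+|x|)^{-2} + log(e+|x|) (1+|x|)^{-(a+b−2)} ). -/
open MeasureTheory Metric Set

abbrev E2 := EuclideanSpace ℝ (Fin 2)

lemma rad_aux (f : ℝ → ℝ) :
    ∫ y : E2, f ‖y‖ = 2 * (volume (ball (0:E2) 1)).toReal * ∫ r in Ioi (0:ℝ), r * f r := by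
  have h := MeasureTheory.integral_fun_norm_addHaar (volume : Measure E2) f
  rw [finrank_euclideanSpace_fin] at h
  simpa [smul_eq_mul, pow_one, mul_assoc, Measure.real] using h

lemma contE (p : ℝ) : Continuous fun y : E2 => (1 + ‖y‖) ^ p :=
  Continuous.rpow_const (by fun_prop) (fun y => Or.inl (by positivity))

lemma rpow_anti2 {x y p : ℝ} (hx : 0 < x) (hxy : x ≤ y) (hp : 0 ≤ p) :
    y ^ (-p) ≤ x ^ (-p) :=
  Real.rpow_le_rpow_of_nonpos hx hxy (neg_nonpos.mpr hp)

lemma rpow_half (p v : ℝ) (hv : 0 < v) : (v/2) ^ (-p) = 2 ^ p * v ^ (-p) := by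
  rw [Real.div_rpow hv.le (by norm_num), Real.rpow_neg (by norm_num : (0:ℝ) ≤ 2),
    div_inv_eq_mul, mul_comm]

lemma rpow_merge (t p q : ℝ) (ht : 0 < t) : t ^ (-p) * t ^ (-q) = t ^ (-(p+q)) := by
  rw [← Real.rpow_add ht, neg_add]

lemma ball_log (c : ℝ) (hc : 0 ≤ c) :
    ∫ y in closedBall (0:E2) c, (1 + ‖y‖) ^ (-(2:ℝ)) ≤
      2 * (volume (ball (0:E2) 1)).toReal * Real.log (1 + c) := by
  set V := (volume (ball (0:E2) 1)).toReal with hV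
  have hV0 : 0 ≤ V := ENNReal.toReal_nonneg
  have h1 : (∫ y in closedBall (0:E2) c, (1 + ‖y‖) ^ (-(2:ℝ)))
      = ∫ y : E2, (Iic c).indicator (fun r => (1+r) ^ (-(2:ℝ))) ‖y‖ := by
    rw [← integral_indicator (measurableSet_closedBall)]
    congr 1
    funext y
    by_cases h : ‖y‖ ≤ c <;>
      simp [Set.indicator_apply, mem_closedBall_zero_iff, h]
  rw [h1, rad_aux]
  have h2 : (∫ r in Ioi (0:ℝ), r * (Iic c).indicator (fun r => (1+r) ^ (-(2:ℝ))) r)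
      = ∫ r in Ioc (0:ℝ) c, r * (1+r) ^ (-(2:ℝ)) := by
    rw [show (Ioc (0:ℝ) c) = Ioi 0 ∩ Iic c by rw [Set.Ioi_inter_Iic],
      ← setIntegral_indicator measurableSet_Iic]
    congr 1
    funext r
    by_cases h : r ∈ Iic c <;> simp [Set.indicator_apply, h]
  rw [h2]
  have key : (∫ r in Ioc (0:ℝ) c, r * (1+r) ^ (-(2:ℝ))) ≤ Real.log (1 + c) := by
    have hle : ∀ r ∈ Ioc (0:ℝ) c, r * (1+r) ^ (-(2:ℝ)) ≤ (1+r)⁻¹ := by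
      intro r hr
      have h0 : (0:ℝ) < 1 + r := by have := hr.1; linarith
      have : r * (1+r) ^ (-(2:ℝ)) ≤ (1+r) * (1+r) ^ (-(2:ℝ)) :=
        mul_le_mul_of_nonneg_right (by linarith) (Real.rpow_nonneg h0.le _)
      refine this.trans_eq ?_
      rw [show (1+r) * (1+r) ^ (-(2:ℝ)) = (1+r) ^ (1:ℝ) * (1+r) ^ (-(2:ℝ)) by
            rw [Real.rpow_one],
        ← Real.rpow_add h0]
      norm_num [Real.rpow_neg_one]
    have hint1 : IntegrableOn (fun r : ℝ => r * (1+r) ^ (-(2:ℝ))) (Ioc 0 c) := by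
      apply (ContinuousOn.integrableOn_Icc ?_).mono_set Ioc_subset_Icc_self
      refine continuousOn_id.mul (ContinuousOn.rpow_const ?_ ?_)
      · fun_prop
      · intro r hr
        exact Or.inl (by simp at hr; nlinarith [hr.1])
    have hint2 : IntegrableOn (fun r : ℝ => (1+r)⁻¹) (Ioc 0 c) := by
      apply (ContinuousOn.integrableOn_Icc ?_).mono_set Ioc_subset_Icc_self
      refine ContinuousOn.inv₀ (by fun_prop) ?_
      intro r hr
      simp at hr; nlinarith [hr.1]
    have := setIntegral_mono_on hint1 hint2 measurableSet_Ioc hle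
    refine this.trans ?_
    have : (∫ r in Ioc (0:ℝ) c, (1+r)⁻¹) = ∫ r in (0:ℝ)..c, (1+r)⁻¹ := by
      rw [intervalIntegral.integral_of_le hc]
    rw [this]
    have hcomp : (∫ r in (0:ℝ)..c, (1+r)⁻¹) = ∫ r in (1:ℝ)..(1+c), 1/r := by
      rw [show (∫ r in (0:ℝ)..c, (1+r)⁻¹) = ∫ r in (0:ℝ)..c, (fun t => 1/t) (1 + r) by
            simp [one_div]]
      rw [intervalIntegral.integral_comp_add_left (fun t => 1/t) 1]
      norm_num
    rw [hcomp, integral_one_div (by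
      intro h
      rcases Set.mem_uIcc.mp h with ⟨h1, _⟩ | ⟨_, h2⟩ <;> linarith)]
    rw [div_one]
  calc 2 * V * (∫ r in Ioc (0:ℝ) c, r * (1+r) ^ (-(2:ℝ)))
      ≤ 2 * V * Real.log (1 + c) := by
        apply mul_le_mul_of_nonneg_left key (by positivity)

lemma tail_bound (q T : ℝ) (hq : 2 < q) (hT : 1 ≤ T) :
    ∫ y in (closedBall (0:E2) T)ᶜ, (1 + ‖y‖) ^ (-q) ≤
      2 * (volume (ball (0:E2) 1)).toReal * (T ^ (2 - q) / (q - 2)) := by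
  set V := (volume (ball (0:E2) 1)).toReal with hV
  have hV0 : 0 ≤ V := ENNReal.toReal_nonneg
  have h1 : (∫ y in (closedBall (0:E2) T)ᶜ, (1 + ‖y‖) ^ (-q))
      = ∫ y : E2, (Ioi T).indicator (fun r => (1+r) ^ (-q)) ‖y‖ := by
    rw [← integral_indicator (measurableSet_closedBall.compl)]
    congr 1
    funext y
    by_cases h : T < ‖y‖
    · rw [Set.indicator_of_mem (by simp [mem_closedBall_zero_iff, not_le.mpr h]),
        Set.indicator_of_mem (by exact h)]
    · rw [Set.indicator_of_notMem (by simp [mem_closedBall_zero_iff, not_lt.mp h]),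
        Set.indicator_of_notMem (by exact h)]
  rw [h1, rad_aux]
  have h2 : (∫ r in Ioi (0:ℝ), r * (Ioi T).indicator (fun r => (1+r) ^ (-q)) r)
      = ∫ r in Ioi T, r * (1+r) ^ (-q) := by
    have e1 : (fun r : ℝ => r * (Ioi T).indicator (fun r => (1+r) ^ (-q)) r)
        = (Ioi T).indicator (fun r => r * (1+r) ^ (-q)) := by
      funext r
      by_cases h : r ∈ Ioi T <;> simp [Set.indicator_apply, h]
    rw [e1, setIntegral_indicator measurableSet_Ioi,
      Set.inter_eq_right.mpr (Ioi_subset_Ioi (by linarith : (0:ℝ) ≤ T))]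
  rw [h2]
  have hrhs : IntegrableOn (fun r : ℝ => r ^ (1 - q)) (Ioi T) :=
    integrableOn_Ioi_rpow_of_lt (by linarith) (by linarith)
  have hle : ∀ r ∈ Ioi T, r * (1+r) ^ (-q) ≤ r ^ (1 - q) := by
    intro r hr
    have hr0 : (0:ℝ) < r := by have := hr.out; linarith
    have h1 : (1+r) ^ (-q) ≤ r ^ (-q) :=
      Real.rpow_le_rpow_of_nonpos hr0 (by linarith) (by linarith)
    calc r * (1+r) ^ (-q) ≤ r * r ^ (-q) :=
          mul_le_mul_of_nonneg_left h1 hr0.le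
      _ = r ^ (1:ℝ) * r ^ (-q) := by rw [Real.rpow_one]
      _ = r ^ (1 - q) := by rw [← Real.rpow_add hr0]; ring_nf
  have hlhs : IntegrableOn (fun r : ℝ => r * (1+r) ^ (-q)) (Ioi T) := by
    refine hrhs.mono' ?_ ?_
    · apply Measurable.aestronglyMeasurable
      fun_prop
    · filter_upwards [ae_restrict_mem measurableSet_Ioi] with r hr
      have hr0 : (0:ℝ) < r := by have := hr.out; linarith
      rw [Real.norm_eq_abs, abs_of_nonneg (by positivity)]
      exact hle r hr
  have key := setIntegral_mono_on hlhs hrhs measurableSet_Ioi hle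
  have hval : (∫ r in Ioi T, r ^ (1 - q)) = T ^ (2 - q) / (q - 2) := by
    rw [integral_Ioi_rpow_of_lt (by linarith) (by linarith : (0:ℝ) < T)]
    rw [show (1 - q) + 1 = 2 - q by ring, show (2:ℝ) - q = -(q - 2) by ring]
    rw [div_neg, neg_div, neg_neg]
  calc 2 * V * (∫ r in Ioi T, r * (1+r) ^ (-q))
      ≤ 2 * V * (∫ r in Ioi T, r ^ (1 - q)) := by
        apply mul_le_mul_of_nonneg_left key (by positivity)
    _ = 2 * V * (T ^ (2 - q) / (q - 2)) := by rw [hval]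

lemma g2_bound (b : ℝ) (hb : 0 < b) :
    ∃ D : ℝ, 0 ≤ D ∧ ∀ R : ℝ, 1 ≤ R →
      (∫ z in closedBall (0:E2) (R/2), (1 + ‖z‖) ^ (-b)) ≤
        D * (1+R) ^ (2:ℝ) *
          ((1+R) ^ (-(2:ℝ)) + Real.log (Real.exp 1 + R) * (1+R) ^ (-b)) := by
  set V := (volume (ball (0:E2) 1)).toReal with hV
  have hV0 : 0 ≤ V := ENNReal.toReal_nonneg
  rcases le_or_gt b 2 with hb2 | hb2
  · refine ⟨2 * V, by positivity, fun R hR => ?_⟩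
    have hR0 : (0:ℝ) < 1 + R := by linarith
    have hL : Real.log (1 + R/2) ≤ Real.log (Real.exp 1 + R) := by
      apply Real.log_le_log (by linarith)
      nlinarith [Real.add_one_le_exp (1:ℝ)]
    have hL0 : 0 ≤ Real.log (1 + R/2) := Real.log_nonneg (by linarith)
    have step1 : (∫ z in closedBall (0:E2) (R/2), (1 + ‖z‖) ^ (-b)) ≤
        ∫ z in closedBall (0:E2) (R/2), (1+R) ^ (2-b) * (1 + ‖z‖) ^ (-(2:ℝ)) := by
      apply setIntegral_mono_on
      · exact ((contE (-b)).continuousOn).integrableOn_compact (isCompact_closedBall _ _)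
      · exact ((continuous_const.mul (contE (-(2:ℝ)))).continuousOn).integrableOn_compact
          (isCompact_closedBall _ _)
      · exact measurableSet_closedBall
      · intro z hz
        have hz' : ‖z‖ ≤ R/2 := mem_closedBall_zero_iff.mp hz
        have h0 : (0:ℝ) < 1 + ‖z‖ := by positivity
        have e1 : (1 + ‖z‖) ^ (-b) = (1 + ‖z‖) ^ (2-b) * (1 + ‖z‖) ^ (-(2:ℝ)) := by
          rw [← Real.rpow_add h0]; ring_nf
        rw [e1]
        apply mul_le_mul_of_nonneg_right _ (Real.rpow_nonneg h0.le _)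
        apply Real.rpow_le_rpow h0.le (by linarith) (by linarith)
    have step2 : (∫ z in closedBall (0:E2) (R/2), (1+R) ^ (2-b) * (1 + ‖z‖) ^ (-(2:ℝ)))
        ≤ (1+R) ^ (2-b) * (2 * V * Real.log (1 + R/2)) := by
      rw [integral_const_mul]
      exact mul_le_mul_of_nonneg_left (ball_log (R/2) (by linarith))
        (Real.rpow_nonneg hR0.le _)
    refine (step1.trans step2).trans ?_
    have e2 : (1+R) ^ (2-b) = (1+R) ^ (2:ℝ) * (1+R) ^ (-b) := by
      rw [← Real.rpow_add hR0]; ring_nf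
    have : (1+R) ^ (2-b) * (2 * V * Real.log (1 + R/2))
        ≤ (1+R) ^ (2-b) * (2 * V * Real.log (Real.exp 1 + R)) := by
      apply mul_le_mul_of_nonneg_left _ (Real.rpow_nonneg hR0.le _)
      apply mul_le_mul_of_nonneg_left hL (by positivity)
    refine this.trans ?_
    rw [e2]
    have h1 : 0 ≤ (1+R) ^ (-(2:ℝ)) := Real.rpow_nonneg hR0.le _
    have h2 : 0 ≤ (1+R) ^ (2:ℝ) := Real.rpow_nonneg hR0.le _
    have h3 : 0 ≤ (1+R) ^ (-b) := Real.rpow_nonneg hR0.le _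
    nlinarith [mul_nonneg (mul_nonneg (by positivity : (0:ℝ) ≤ 2*V) h2) h1]
  · -- b > 2
    have hint : Integrable (fun z : E2 => (1 + ‖z‖) ^ (-b)) := by
      apply integrable_one_add_norm (E := E2)
      rw [finrank_euclideanSpace_fin]; norm_num; linarith
    set J := ∫ z : E2, (1 + ‖z‖) ^ (-b) with hJ
    have hJ0 : 0 ≤ J := integral_nonneg fun z => Real.rpow_nonneg (by positivity) _
    refine ⟨J, hJ0, fun R hR => ?_⟩
    have hR0 : (0:ℝ) < 1 + R := by linarith
    have step1 : (∫ z in closedBall (0:E2) (R/2), (1 + ‖z‖) ^ (-b)) ≤ J :=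
      setIntegral_le_integral hint
        (Filter.Eventually.of_forall fun z => Real.rpow_nonneg (by positivity) _)
    refine step1.trans ?_
    have e1 : (1+R) ^ (2:ℝ) * (1+R) ^ (-(2:ℝ)) = 1 := by
      rw [← Real.rpow_add hR0]; norm_num
    have hL0 : 0 ≤ Real.log (Real.exp 1 + R) := Real.log_nonneg (by
      nlinarith [Real.add_one_le_exp (1:ℝ)])
    have h3 : 0 ≤ (1+R) ^ (-b) := Real.rpow_nonneg hR0.le _
    have h2 : 0 ≤ (1+R) ^ (2:ℝ) := Real.rpow_nonneg hR0.le _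
    calc J = J * ((1+R) ^ (2:ℝ) * (1+R) ^ (-(2:ℝ))) := by rw [e1, mul_one]
      _ ≤ J * ((1+R) ^ (2:ℝ) * (1+R) ^ (-(2:ℝ)))
            + J * (1+R) ^ (2:ℝ) * (Real.log (Real.exp 1 + R) * (1+R) ^ (-b)) := by
          nlinarith [mul_nonneg (mul_nonneg hJ0 h2) (mul_nonneg hL0 h3)]
      _ = J * (1+R) ^ (2:ℝ) *
          ((1+R) ^ (-(2:ℝ)) + Real.log (Real.exp 1 + R) * (1+R) ^ (-b)) := by ring

set_option maxHeartbeats 1000000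

/-- For `a, b ≥ 0` with `a + b > 2` and `a = 2`, there is `C > 0` with
`∫ (1+|y|)^{-a} (1+|x−y|)^{-b} dy ≤ C ((1+|x|)^{-2} + log(e+|x|) (1+|x|)^{-(a+b−2)})`
for all `x ∈ ℝ²`. -/
theorem stmt1 (a b : ℝ) (ha : 0 ≤ a) (hb : 0 ≤ b) (hab : 2 < a + b) (ha2 : a = 2) :
    ∃ C : ℝ, 0 < C ∧ ∀ x : EuclideanSpace ℝ (Fin 2),
      (∫ y : EuclideanSpace ℝ (Fin 2), (1 + ‖y‖) ^ (-a) * (1 + ‖x - y‖) ^ (-b))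
        ≤ C * ((1 + ‖x‖) ^ (-(2:ℝ)) +
            Real.log (Real.exp 1 + ‖x‖) * (1 + ‖x‖) ^ (-(a + b - 2))) := by
  subst ha2
  have hb0 : 0 < b := by linarith
  obtain ⟨D, hD0, hD⟩ := g2_bound b hb0
  set V := (volume (ball (0:E2) 1)).toReal with hV
  have hV0 : 0 ≤ V := ENNReal.toReal_nonneg
  have hJint : Integrable (fun y : E2 => (1 + ‖y‖) ^ (-(2+b))) := by
    apply integrable_one_add_norm (E := E2)
    rw [finrank_euclideanSpace_fin]; push_cast; linarith
  set J := ∫ y : E2, (1 + ‖y‖) ^ (-(2+b)) with hJ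
  have hJ0 : 0 ≤ J := integral_nonneg fun z => Real.rpow_nonneg (by positivity) _
  set T2 : ℝ := 2 ^ b with hT2
  have hT20 : (0:ℝ) < T2 := Real.rpow_pos_of_pos (by norm_num) b
  have hK0 : 0 ≤ T2*2*V*(9+1/b) := by
    apply mul_nonneg (by nlinarith) (by positivity)
  have hTJ : 0 ≤ 4*T2*J := mul_nonneg (mul_nonneg (by norm_num) hT20.le) hJ0
  refine ⟨4*T2*J + T2*2*V*(9+1/b) + 4*D + 1, by linarith, ?_⟩
  intro x
  rw [show (2:ℝ) + b - 2 = b from by ring]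
  generalize hCg : 4*T2*J + T2*2*V*(9+1/b) + 4*D + 1 = C
  have hC0 : (0:ℝ) ≤ C := by rw [← hCg]; linarith
  have hCbig : 4*T2*J ≤ C := by rw [← hCg]; linarith
  have hCK : T2*2*V*(9+1/b) + 4*D ≤ C := by rw [← hCg]; linarith
  set R := ‖x‖ with hR
  have hR0 : 0 ≤ R := norm_nonneg x
  have h1R : (0:ℝ) < 1 + R := by linarith
  have hL1 : 1 ≤ Real.log (Real.exp 1 + R) := by
    rw [Real.le_log_iff_exp_le (by positivity)]
    linarith
  set L := Real.log (Real.exp 1 + R) with hLdef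
  have hP2 : 0 ≤ (1+R) ^ (-(2:ℝ)) := Real.rpow_nonneg h1R.le _
  have hPb : 0 ≤ (1+R) ^ (-b) := Real.rpow_nonneg h1R.le _
  set P2 := (1+R) ^ (-(2:ℝ)) with hP2def
  set Pb := (1+R) ^ (-b) with hPbdef
  have hf0 : ∀ y : E2, 0 ≤ (1 + ‖y‖) ^ (-(2:ℝ)) * (1 + ‖x - y‖) ^ (-b) := fun y =>
    mul_nonneg (Real.rpow_nonneg (by positivity) _) (Real.rpow_nonneg (by positivity) _)
  have hLPb0 : 0 ≤ L * Pb := mul_nonneg (by linarith) hPb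
  have hq0 : 0 ≤ P2 + L * Pb := add_nonneg hP2 hLPb0
  rcases le_or_gt R 1 with hsmall | hbig
  · -- small case
    have hpt : ∀ y : E2, (1 + ‖y‖) ^ (-(2:ℝ)) * (1 + ‖x - y‖) ^ (-b)
        ≤ T2 * (1 + ‖y‖) ^ (-(2+b)) := by
      intro y
      have h0 : (0:ℝ) < 1 + ‖y‖ := by positivity
      have hkey : (1 + ‖y‖)/2 ≤ 1 + ‖x - y‖ := by
        have h1 : ‖y‖ - ‖x‖ ≤ ‖y - x‖ := norm_sub_norm_le y x
        rw [norm_sub_rev] at h1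
        have := norm_nonneg (x - y)
        rw [← hR] at h1
        linarith
      have hstep : (1 + ‖x - y‖) ^ (-b) ≤ T2 * (1 + ‖y‖) ^ (-b) := by
        have h2 := rpow_anti2 (x := (1+‖y‖)/2) (y := 1 + ‖x - y‖)
          (by positivity) hkey hb0.le
        rwa [rpow_half b _ h0] at h2
      calc (1 + ‖y‖) ^ (-(2:ℝ)) * (1 + ‖x - y‖) ^ (-b)
          ≤ (1 + ‖y‖) ^ (-(2:ℝ)) * (T2 * (1 + ‖y‖) ^ (-b)) :=
            mul_le_mul_of_nonneg_left hstep (Real.rpow_nonneg h0.le _)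
        _ = T2 * (1 + ‖y‖) ^ (-(2+b)) := by
            rw [← rpow_merge (1+‖y‖) 2 b h0]; ring
    have hint : (∫ y : E2, (1 + ‖y‖) ^ (-(2:ℝ)) * (1 + ‖x - y‖) ^ (-b)) ≤ T2 * J := by
      have h := integral_mono_of_nonneg (Filter.Eventually.of_forall hf0)
        (hJint.const_mul T2) (Filter.Eventually.of_forall hpt)
      rwa [integral_const_mul] at h
    have hquarter : (1:ℝ)/4 ≤ P2 := by
      have h2 := rpow_anti2 (x := 1+R) (y := 2) h1R (by linarith) (by norm_num : (0:ℝ) ≤ 2)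
      have h24 : (2:ℝ) ^ (-(2:ℝ)) = 1/4 := by norm_num
      rw [h24] at h2
      exact h2
    refine hint.trans ?_
    calc T2 * J ≤ C * (1/4) := by linarith
      _ ≤ C * P2 := mul_le_mul_of_nonneg_left hquarter hC0
      _ ≤ C * (P2 + L * Pb) := mul_le_mul_of_nonneg_left (by linarith) hC0
  · -- main case, R > 1
    have hR1 : (1:ℝ) ≤ R := hbig.le
    -- the four majorant pieces
    set g1 : E2 → ℝ := (closedBall (0:E2) (R/2)).indicator
      (fun y => T2 * Pb * (1 + ‖y‖) ^ (-(2:ℝ))) with hg1def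
    set g2 : E2 → ℝ := (closedBall x (R/2)).indicator
      (fun y => 4 * P2 * (1 + ‖x - y‖) ^ (-b)) with hg2def
    set g3 : E2 → ℝ := (closedBall (0:E2) (2*R)).indicator
      (fun _ => 4 * T2 * (1+R) ^ (-(2+b))) with hg3def
    set g4 : E2 → ℝ := ((closedBall (0:E2) (2*R))ᶜ).indicator
      (fun y => T2 * (1 + ‖y‖) ^ (-(2+b))) with hg4def
    have hg1n : ∀ y, 0 ≤ g1 y := fun y => Set.indicator_nonneg
      (fun z _ => by positivity) y
    have hg2n : ∀ y, 0 ≤ g2 y := fun y => Set.indicator_nonneg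
      (fun z _ => by positivity) y
    have hg3n : ∀ y, 0 ≤ g3 y := fun y => Set.indicator_nonneg
      (fun z _ => by positivity) y
    have hg4n : ∀ y, 0 ≤ g4 y := fun y => Set.indicator_nonneg
      (fun z _ => by positivity) y
    -- integrability
    have hI1 : Integrable g1 := by
      rw [hg1def]
      exact (((continuous_const.mul (contE (-(2:ℝ)))).continuousOn).integrableOn_compact
        (isCompact_closedBall _ _)).integrable_indicator measurableSet_closedBall
    have hI2 : Integrable g2 := by
      rw [hg2def]
      have hc : Continuous fun y : E2 => 4 * P2 * (1 + ‖x - y‖) ^ (-b) :=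
        continuous_const.mul ((contE (-b)).comp (continuous_const.sub continuous_id))
      exact (hc.continuousOn.integrableOn_compact
        (isCompact_closedBall _ _)).integrable_indicator measurableSet_closedBall
    have hI3 : Integrable g3 := by
      rw [hg3def]
      exact (integrableOn_const measure_closedBall_lt_top.ne).integrable_indicator
        measurableSet_closedBall
    have hI4 : Integrable g4 := by
      rw [hg4def]
      exact (hJint.const_mul T2).indicator measurableSet_closedBall.compl
    -- pointwise bound
    have hpt : ∀ y : E2, (1 + ‖y‖) ^ (-(2:ℝ)) * (1 + ‖x - y‖) ^ (-b)
        ≤ g1 y + (g2 y + (g3 y + g4 y)) := by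
      intro y
      have h0 : (0:ℝ) < 1 + ‖y‖ := by positivity
      have h0' : (0:ℝ) < 1 + ‖x - y‖ := by positivity
      have hA0 : 0 ≤ (1 + ‖y‖) ^ (-(2:ℝ)) := Real.rpow_nonneg h0.le _
      have hB0 : 0 ≤ (1 + ‖x - y‖) ^ (-b) := Real.rpow_nonneg h0'.le _
      by_cases h1 : ‖y‖ ≤ R/2
      · -- region 1
        have hxy : R/2 ≤ ‖x - y‖ := by
          have := norm_sub_norm_le x y
          rw [← hR] at this; linarith
        have hstep : (1 + ‖x - y‖) ^ (-b) ≤ T2 * Pb := by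
          have h2 := rpow_anti2 (x := (1+R)/2) (y := 1 + ‖x - y‖)
            (by positivity) (by linarith) hb0.le
          rwa [rpow_half b _ h1R] at h2
        have hg1y : g1 y = T2 * Pb * (1 + ‖y‖) ^ (-(2:ℝ)) := by
          rw [hg1def, Set.indicator_of_mem (mem_closedBall_zero_iff.mpr h1)]
        have : (1 + ‖y‖) ^ (-(2:ℝ)) * (1 + ‖x - y‖) ^ (-b) ≤ g1 y := by
          rw [hg1y]
          calc (1 + ‖y‖) ^ (-(2:ℝ)) * (1 + ‖x - y‖) ^ (-b)
              ≤ (1 + ‖y‖) ^ (-(2:ℝ)) * (T2 * Pb) :=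
                mul_le_mul_of_nonneg_left hstep hA0
            _ = T2 * Pb * (1 + ‖y‖) ^ (-(2:ℝ)) := by ring
        linarith [hg2n y, hg3n y, hg4n y]
      · by_cases h2 : ‖x - y‖ ≤ R/2
        · -- region 2
          have hstepA : (1 + ‖y‖) ^ (-(2:ℝ)) ≤ 4 * P2 := by
            have h3 := rpow_anti2 (x := (1+R)/2) (y := 1 + ‖y‖)
              (by positivity) (by push_neg at h1; linarith) (by norm_num : (0:ℝ) ≤ 2)
            rw [rpow_half 2 _ h1R] at h3
            have h24 : (2:ℝ) ^ (2:ℝ) = 4 := by norm_num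
            rw [h24] at h3
            exact h3
          have hg2y : g2 y = 4 * P2 * (1 + ‖x - y‖) ^ (-b) := by
            rw [hg2def, Set.indicator_of_mem (mem_closedBall_iff_norm.mpr
              (by rw [norm_sub_rev]; exact h2))]
          have : (1 + ‖y‖) ^ (-(2:ℝ)) * (1 + ‖x - y‖) ^ (-b) ≤ g2 y := by
            rw [hg2y]
            exact mul_le_mul_of_nonneg_right hstepA hB0
          linarith [hg1n y, hg3n y, hg4n y]
        · by_cases h3 : ‖y‖ ≤ 2*R
          · -- region 3
            have hstepA : (1 + ‖y‖) ^ (-(2:ℝ)) ≤ 4 * P2 := by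
              have h4 := rpow_anti2 (x := (1+R)/2) (y := 1 + ‖y‖)
                (by positivity) (by push_neg at h1; linarith) (by norm_num : (0:ℝ) ≤ 2)
              rw [rpow_half 2 _ h1R] at h4
              have h24 : (2:ℝ) ^ (2:ℝ) = 4 := by norm_num
              rw [h24] at h4
              exact h4
            have hstepB : (1 + ‖x - y‖) ^ (-b) ≤ T2 * Pb := by
              have h5 := rpow_anti2 (x := (1+R)/2) (y := 1 + ‖x - y‖)
                (by positivity) (by push_neg at h2; linarith) hb0.le
              rwa [rpow_half b _ h1R] at h5
            have hg3y : g3 y = 4 * T2 * (1+R) ^ (-(2+b)) := by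
              rw [hg3def, Set.indicator_of_mem (mem_closedBall_zero_iff.mpr h3)]
            have : (1 + ‖y‖) ^ (-(2:ℝ)) * (1 + ‖x - y‖) ^ (-b) ≤ g3 y := by
              rw [hg3y]
              calc (1 + ‖y‖) ^ (-(2:ℝ)) * (1 + ‖x - y‖) ^ (-b)
                  ≤ (4 * P2) * (T2 * Pb) :=
                    mul_le_mul hstepA hstepB hB0 (by positivity)
                _ = 4 * T2 * (P2 * Pb) := by ring
                _ = 4 * T2 * (1+R) ^ (-(2+b)) := by
                    rw [hP2def, hPbdef, rpow_merge (1+R) 2 b h1R]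
            linarith [hg1n y, hg2n y, hg4n y]
          · -- region 4
            push_neg at h3
            have hxy : ‖y‖/2 ≤ ‖x - y‖ := by
              have h6 := norm_sub_norm_le y x
              rw [norm_sub_rev] at h6
              rw [← hR] at h6; linarith
            have hstep : (1 + ‖x - y‖) ^ (-b) ≤ T2 * (1 + ‖y‖) ^ (-b) := by
              have h7 := rpow_anti2 (x := (1+‖y‖)/2) (y := 1 + ‖x - y‖)
                (by positivity) (by linarith) hb0.le
              rwa [rpow_half b _ h0] at h7
            have hg4y : g4 y = T2 * (1 + ‖y‖) ^ (-(2+b)) := by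
              rw [hg4def, Set.indicator_of_mem
                (by simp [mem_closedBall_zero_iff, not_le.mpr h3])]
            have : (1 + ‖y‖) ^ (-(2:ℝ)) * (1 + ‖x - y‖) ^ (-b) ≤ g4 y := by
              rw [hg4y]
              calc (1 + ‖y‖) ^ (-(2:ℝ)) * (1 + ‖x - y‖) ^ (-b)
                  ≤ (1 + ‖y‖) ^ (-(2:ℝ)) * (T2 * (1 + ‖y‖) ^ (-b)) :=
                    mul_le_mul_of_nonneg_left hstep hA0
                _ = T2 * ((1 + ‖y‖) ^ (-(2:ℝ)) * (1 + ‖y‖) ^ (-b)) := by ring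
                _ = T2 * (1 + ‖y‖) ^ (-(2+b)) := by
                    rw [rpow_merge (1+‖y‖) 2 b h0]
            linarith [hg1n y, hg2n y, hg3n y]
    -- split the integral
    have hI34 : Integrable (fun y => g3 y + g4 y) := hI3.add hI4
    have hI234 : Integrable (fun y => g2 y + (g3 y + g4 y)) := hI2.add hI34
    have hIall : Integrable (fun y => g1 y + (g2 y + (g3 y + g4 y))) := hI1.add hI234
    have e3 : (∫ y, g3 y + g4 y) = (∫ y, g3 y) + (∫ y, g4 y) := integral_add hI3 hI4
    have e2 : (∫ y, g2 y + (g3 y + g4 y)) = (∫ y, g2 y) + (∫ y, g3 y + g4 y) :=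
      integral_add hI2 hI34
    have e1 : (∫ y, g1 y + (g2 y + (g3 y + g4 y)))
        = (∫ y, g1 y) + (∫ y, g2 y + (g3 y + g4 y)) := integral_add hI1 hI234
    have hsplit : (∫ y : E2, (1 + ‖y‖) ^ (-(2:ℝ)) * (1 + ‖x - y‖) ^ (-b))
        ≤ (∫ y, g1 y) + ((∫ y, g2 y) + ((∫ y, g3 y) + (∫ y, g4 y))) := by
      have h := integral_mono_of_nonneg (Filter.Eventually.of_forall hf0)
        hIall (Filter.Eventually.of_forall hpt)
      calc (∫ y : E2, (1 + ‖y‖) ^ (-(2:ℝ)) * (1 + ‖x - y‖) ^ (-b))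
          ≤ ∫ y, g1 y + (g2 y + (g3 y + g4 y)) := h
        _ = (∫ y, g1 y) + ((∫ y, g2 y) + ((∫ y, g3 y) + (∫ y, g4 y))) := by
            rw [e1, e2, e3]
    -- bound each piece
    have hB1 : (∫ y, g1 y) ≤ (T2*2*V) * (L * Pb) := by
      rw [hg1def, integral_indicator measurableSet_closedBall, integral_const_mul]
      have h8 := ball_log (R/2) (by linarith)
      have hlog : Real.log (1 + R/2) ≤ L := by
        rw [hLdef]
        apply Real.log_le_log (by linarith)
        nlinarith [Real.add_one_le_exp (1:ℝ)]
      have hlog0 : 0 ≤ Real.log (1 + R/2) := Real.log_nonneg (by linarith)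
      calc T2 * Pb * ∫ y in closedBall (0:E2) (R/2), (1 + ‖y‖) ^ (-(2:ℝ))
          ≤ T2 * Pb * (2 * V * Real.log (1 + R/2)) := by
            apply mul_le_mul_of_nonneg_left h8 (by positivity)
        _ ≤ T2 * Pb * (2 * V * L) := by
            apply mul_le_mul_of_nonneg_left _ (by positivity)
            exact mul_le_mul_of_nonneg_left hlog (by positivity)
        _ = (T2*2*V) * (L * Pb) := by ring
    have hB2 : (∫ y, g2 y) ≤ (4*D) * (P2 + L * Pb) := by
      have e0 : (fun y : E2 => g2 y) = fun y =>
          ((closedBall (0:E2) (R/2)).indicator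
            (fun z => 4 * P2 * (1 + ‖z‖) ^ (-b))) (x - y) := by
        funext y
        rw [hg2def]
        by_cases h : ‖x - y‖ ≤ R/2
        · rw [Set.indicator_of_mem (mem_closedBall_iff_norm.mpr
              (by rw [norm_sub_rev]; exact h)),
            Set.indicator_of_mem (mem_closedBall_zero_iff.mpr h)]
        · rw [Set.indicator_of_notMem (fun hmem => h (by
              rw [norm_sub_rev]; exact mem_closedBall_iff_norm.mp hmem)),
            Set.indicator_of_notMem (fun hmem => h (mem_closedBall_zero_iff.mp hmem))]
      rw [e0, integral_sub_left_eq_self _ volume x,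
        integral_indicator measurableSet_closedBall, integral_const_mul]
      have h9 := hD R hR1
      have e1 : (1+R) ^ (2:ℝ) * P2 = 1 := by
        rw [hP2def, ← Real.rpow_add h1R]; norm_num
      calc 4 * P2 * ∫ z in closedBall (0:E2) (R/2), (1 + ‖z‖) ^ (-b)
          ≤ 4 * P2 * (D * (1+R) ^ (2:ℝ) * (P2 + L * Pb)) := by
            apply mul_le_mul_of_nonneg_left h9 (by positivity)
        _ = 4 * D * ((1+R) ^ (2:ℝ) * P2) * (P2 + L * Pb) := by ring
        _ = (4*D) * (P2 + L * Pb) := by rw [e1]; ring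
    have hB3 : (∫ y, g3 y) ≤ (16*T2*V) * Pb := by
      rw [hg3def, integral_indicator measurableSet_closedBall, setIntegral_const,
        smul_eq_mul]
      have hvol : (volume (closedBall (0:E2) (2*R))).toReal = (2*R)^(2:ℕ) * V := by
        rw [Measure.addHaar_closedBall _ _ (by positivity : (0:ℝ) ≤ 2*R),
          finrank_euclideanSpace_fin, ENNReal.toReal_mul,
          ENNReal.toReal_ofReal (by positivity)]
      rw [measureReal_def, hvol]
      have e2 : (1+R) ^ (2:ℝ) * (1+R) ^ (-(2+b)) = Pb := by
        rw [hPbdef, ← Real.rpow_add h1R]; ring_nf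
      have hsq : ((2*R):ℝ)^(2:ℕ) ≤ 4 * (1+R) ^ (2:ℝ) := by
        have hpow : ((1+R):ℝ) ^ (2:ℝ) = (1+R)^(2:ℕ) := by
          rw [← Real.rpow_natCast (1+R) 2]
          norm_num
        rw [hpow]
        nlinarith [hR0]
      have hX0 : 0 ≤ (1+R) ^ (-(2+b)) := Real.rpow_nonneg h1R.le _
      calc (2*R)^(2:ℕ) * V * (4 * T2 * (1+R) ^ (-(2+b)))
          ≤ (4 * (1+R) ^ (2:ℝ)) * V * (4 * T2 * (1+R) ^ (-(2+b))) := by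
            apply mul_le_mul_of_nonneg_right (mul_le_mul_of_nonneg_right hsq hV0)
              (by positivity)
        _ = (16*T2*V) * ((1+R) ^ (2:ℝ) * (1+R) ^ (-(2+b))) := by ring
        _ = (16*T2*V) * Pb := by rw [e2]
    have hB4 : (∫ y, g4 y) ≤ (T2*2*V/b) * Pb := by
      rw [hg4def, integral_indicator measurableSet_closedBall.compl, integral_const_mul]
      have h10 := tail_bound (2+b) (2*R) (by linarith) (by linarith)
      rw [show (2:ℝ) - (2+b) = -b from by ring, show (2:ℝ) + b - 2 = b from by ring] at h10
      have h11 : ((2*R):ℝ) ^ (-b) ≤ Pb := by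
        rw [hPbdef]
        exact rpow_anti2 h1R (by linarith) hb0.le
      calc T2 * ∫ y in (closedBall (0:E2) (2*R))ᶜ, (1 + ‖y‖) ^ (-(2+b))
          ≤ T2 * (2 * V * ((2*R) ^ (-b) / b)) := by
            apply mul_le_mul_of_nonneg_left h10 hT20.le
        _ ≤ T2 * (2 * V * (Pb / b)) := by
            apply mul_le_mul_of_nonneg_left _ hT20.le
            apply mul_le_mul_of_nonneg_left _ (by positivity)
            exact (div_le_div_iff_of_pos_right hb0).mpr h11
        _ = (T2*2*V/b) * Pb := by ring
    -- assemble
    have hPbLPb : Pb ≤ L * Pb := le_mul_of_one_le_left hPb hL1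
    refine hsplit.trans ?_
    have hfinal : (T2*2*V) * (L * Pb) + ((4*D) * (P2 + L * Pb) + ((16*T2*V) * Pb
        + (T2*2*V/b) * Pb)) ≤ C * (P2 + L * Pb) := by
      have h12 : (16*T2*V) * Pb ≤ (16*T2*V) * (L * Pb) :=
        mul_le_mul_of_nonneg_left hPbLPb (by positivity)
      have h13 : (T2*2*V/b) * Pb ≤ (T2*2*V/b) * (L * Pb) :=
        mul_le_mul_of_nonneg_left hPbLPb (by positivity)
      have h14 : (T2*2*V) * (L*Pb) + (16*T2*V) * (L*Pb) + (T2*2*V/b) * (L*Pb)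
          = (T2*2*V*(9+1/b)) * (L*Pb) := by ring
      have h15 : (T2*2*V*(9+1/b)) * (L*Pb) ≤ (T2*2*V*(9+1/b)) * (P2 + L*Pb) :=
        mul_le_mul_of_nonneg_left (by linarith) hK0
      have h17 : (T2*2*V*(9+1/b) + 4*D) * (P2+L*Pb) ≤ C * (P2+L*Pb) :=
        mul_le_mul_of_nonneg_right (by linarith) hq0
      have h18 : (T2*2*V*(9+1/b) + 4*D) * (P2+L*Pb)
          = (T2*2*V*(9+1/b)) * (P2+L*Pb) + (4*D) * (P2+L*Pb) := by ring
      linarith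
    calc (∫ y, g1 y) + ((∫ y, g2 y) + ((∫ y, g3 y) + (∫ y, g4 y)))
        ≤ (T2*2*V) * (L * Pb) + ((4*D) * (P2 + L * Pb) + ((16*T2*V) * Pb
          + (T2*2*V/b) * Pb)) := by
          exact add_le_add hB1 (add_le_add hB2 (add_le_add hB3 hB4))
      _ ≤ C * (P2 + L * Pb) := hfinal
end

section
/- Let K₁ ⊆ ℝ² be a nonempty compact convex set, B ⊆ ℝ² a bounded set, and O ⊆ 𝕊¹ an open subset of the unit circle. Define 𝒞(O) := ⋂_{ŵ ∈ O} (K₁ + ℝŵ), where K₁ + ℝŵ := { x + tŵ : x ∈ K₁, t ∈ ℝ }. Then 𝒞(O) is closed and convex, and if O contains at least two linearly independent directions then 𝒞(O) is compact. -/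
open Set Pointwise

/-- The cylinder (slab) `K + ℝŵ` generated by translating `K` along the line `ℝŵ`. -/
def cylinder (K : Set (EuclideanSpace ℝ (Fin 2))) (w : EuclideanSpace ℝ (Fin 2)) :
    Set (EuclideanSpace ℝ (Fin 2)) :=
  {x | ∃ k ∈ K, ∃ t : ℝ, x = k + t • w}

lemma cylinder_eq (K : Set (EuclideanSpace ℝ (Fin 2))) (w : EuclideanSpace ℝ (Fin 2)) :
    cylinder K w = K + ((Submodule.span ℝ {w} : Submodule ℝ (EuclideanSpace ℝ (Fin 2))) : Set (EuclideanSpace ℝ (Fin 2))) := by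
  ext x
  simp only [cylinder, mem_setOf_eq, Set.mem_add, SetLike.mem_coe,
    Submodule.mem_span_singleton]
  constructor
  · rintro ⟨k, hk, t, rfl⟩; exact ⟨k, hk, t • w, ⟨t, rfl⟩, rfl⟩
  · rintro ⟨k, hk, _, ⟨t, rfl⟩, rfl⟩; exact ⟨k, hk, t, rfl⟩

lemma cylinder_closed {K : Set (EuclideanSpace ℝ (Fin 2))} (hK : IsCompact K)
    (w : EuclideanSpace ℝ (Fin 2)) : IsClosed (cylinder K w) := by
  rw [cylinder_eq]
  exact IsClosed.add_left_of_isCompact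
    (Submodule.closed_of_finiteDimensional _) hK

lemma cylinder_convex {K : Set (EuclideanSpace ℝ (Fin 2))} (hK : Convex ℝ K)
    (w : EuclideanSpace ℝ (Fin 2)) : Convex ℝ (cylinder K w) := by
  rw [cylinder_eq]
  exact hK.add (Submodule.span ℝ {w}).convex

/-- for `K₁` nonempty compact convex, `B` bounded and `O` open in `𝕊¹`, the set
`𝒞(O) = ⋂_{ŵ ∈ O} (K₁ + ℝŵ)` is closed and convex, and compact if `O` contains two
linearly independent directions. -/
theorem stmt10 (K₁ : Set (EuclideanSpace ℝ (Fin 2)))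
    (hK₁ne : K₁.Nonempty) (hK₁cpt : IsCompact K₁) (hK₁conv : Convex ℝ K₁)
    (B : Set (EuclideanSpace ℝ (Fin 2))) (hB : Bornology.IsBounded B)
    (O : Set (EuclideanSpace ℝ (Fin 2))) (hOsub : O ⊆ Metric.sphere 0 1)
    (hOopen : ∃ U : Set (EuclideanSpace ℝ (Fin 2)), IsOpen U ∧ O = U ∩ Metric.sphere 0 1) :
    IsClosed (⋂ w ∈ O, cylinder K₁ w) ∧
    Convex ℝ (⋂ w ∈ O, cylinder K₁ w) ∧
    ((∃ w₁ ∈ O, ∃ w₂ ∈ O, LinearIndependent ℝ ![w₁, w₂]) →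
      IsCompact (⋂ w ∈ O, cylinder K₁ w)) := by
  have hclosed : IsClosed (⋂ w ∈ O, cylinder K₁ w) :=
    isClosed_biInter fun w _ => cylinder_closed hK₁cpt w
  refine ⟨hclosed, convex_iInter fun w => convex_iInter fun _ => cylinder_convex hK₁conv w, ?_⟩
  rintro ⟨w₁, hw₁, w₂, hw₂, hli⟩
  -- a basis from the two linearly independent directions
  have hcard : Fintype.card (Fin 2) = Module.finrank ℝ (EuclideanSpace ℝ (Fin 2)) := by
    simp [finrank_euclideanSpace]
  let b : Module.Basis (Fin 2) ℝ (EuclideanSpace ℝ (Fin 2)) :=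
    basisOfLinearIndependentOfCardEqFinrank hli hcard
  have hb0 : b 0 = w₁ := by simp [b, coe_basisOfLinearIndependentOfCardEqFinrank]
  have hb1 : b 1 = w₂ := by simp [b, coe_basisOfLinearIndependentOfCardEqFinrank]
  -- the coordinate functionals are continuous
  have hcont : ∀ i : Fin 2, Continuous fun x => b.repr x i := fun i => by
    have := LinearMap.continuous_of_finiteDimensional
      ((Finsupp.lapply i).comp ((b.repr : EuclideanSpace ℝ (Fin 2) ≃ₗ[ℝ] (Fin 2 →₀ ℝ)) : EuclideanSpace ℝ (Fin 2) →ₗ[ℝ] (Fin 2 →₀ ℝ)))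
    exact this
  -- bounds for the coordinates on K₁
  have hbdd : ∀ i : Fin 2, ∃ M : ℝ, ∀ k ∈ K₁, |b.repr k i| ≤ M := by
    intro i
    obtain ⟨M, hM⟩ := (hK₁cpt.image (hcont i)).isBounded.subset_closedBall 0
    exact ⟨M, fun k hk => by
      simpa [Real.dist_eq] using hM (mem_image_of_mem _ hk)⟩
  obtain ⟨M₀, hM₀⟩ := hbdd 0
  obtain ⟨M₁, hM₁⟩ := hbdd 1
  -- key: on the intersection, coordinates are bounded
  have hkey : ∀ x ∈ (⋂ w ∈ O, cylinder K₁ w), |b.repr x 0| ≤ M₀ ∧ |b.repr x 1| ≤ M₁ := by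
    intro x hx
    have hx1 : x ∈ cylinder K₁ w₁ := by
      have := mem_iInter₂.1 hx w₁ hw₁; exact this
    have hx2 : x ∈ cylinder K₁ w₂ := by
      have := mem_iInter₂.1 hx w₂ hw₂; exact this
    obtain ⟨k₁, hk₁, t₁, rfl⟩ := hx1
    obtain ⟨k₂, hk₂, t₂, hxeq⟩ := hx2
    constructor
    · -- coordinate 0 vanishes on w₂: use x = k₂ + t₂ w₂
      have : b.repr (k₂ + t₂ • w₂) 0 = b.repr k₂ 0 := by
        rw [map_add, map_smul, ← hb1, b.repr_self]
        simp
      rw [hxeq, this]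
      exact hM₀ k₂ hk₂
    · have : b.repr (k₁ + t₁ • w₁) 1 = b.repr k₁ 1 := by
        rw [map_add, map_smul, ← hb0, b.repr_self]
        simp
      rw [this]
      exact hM₁ k₁ hk₁
  -- hence the set is bounded
  have hbdd2 : Bornology.IsBounded (⋂ w ∈ O, cylinder K₁ w) := by
    rw [Metric.isBounded_iff_subset_closedBall 0]
    refine ⟨M₀ * ‖w₁‖ + M₁ * ‖w₂‖, fun x hx => ?_⟩
    obtain ⟨h0, h1⟩ := hkey x hx
    have hxsum : x = b.repr x 0 • w₁ + b.repr x 1 • w₂ := by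
      have := b.sum_repr x
      rw [Fin.sum_univ_two, hb0, hb1] at this
      exact this.symm
    rw [Metric.mem_closedBall, dist_zero_right]
    calc ‖x‖ = ‖b.repr x 0 • w₁ + b.repr x 1 • w₂‖ := by rw [← hxsum]
      _ ≤ ‖b.repr x 0 • w₁‖ + ‖b.repr x 1 • w₂‖ := norm_add_le _ _
      _ = |b.repr x 0| * ‖w₁‖ + |b.repr x 1| * ‖w₂‖ := by
          rw [norm_smul, norm_smul, Real.norm_eq_abs, Real.norm_eq_abs]
      _ ≤ M₀ * ‖w₁‖ + M₁ * ‖w₂‖ := by gcongr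
  exact Metric.isCompact_of_isClosed_isBounded hclosed hbdd2
end

section
/- Let K₁ ⊆ ℝ² be a compact convex set and S ⊆ 𝕊¹ a dense subset of the unit circle. Then K₁ = ⋂_{v̂ ∈ S} (K₁ + ℝv̂), where K₁ + ℝv̂ := { x + t v̂ : x ∈ K₁, t ∈ ℝ }. -/
open Set

/-- The cylinder (slab) `K + ℝv̂` generated by translating `K` along the line `ℝv̂`. -/
def cylinder' (K : Set (EuclideanSpace ℝ (Fin 2))) (v : EuclideanSpace ℝ (Fin 2)) :
    Set (EuclideanSpace ℝ (Fin 2)) :=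
  {x | ∃ k ∈ K, ∃ t : ℝ, x = k + t • v}

/-- a compact convex `K₁ ⊆ ℝ²` is the intersection of its cylinders along a
dense set `S` of directions of the unit circle. -/
theorem stmt11 (K₁ : Set (EuclideanSpace ℝ (Fin 2)))
    (hK₁cpt : IsCompact K₁) (hK₁conv : Convex ℝ K₁)
    (S : Set (EuclideanSpace ℝ (Fin 2))) (hSsub : S ⊆ Metric.sphere 0 1)
    (hSdense : Metric.sphere (0 : EuclideanSpace ℝ (Fin 2)) 1 ⊆ closure S) :
    K₁ = ⋂ v ∈ S, cylinder' K₁ v := by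
  apply Subset.antisymm
  · intro x hx
    exact mem_iInter₂.2 fun v hv => ⟨x, hx, 0, by simp⟩
  · intro x hx
    by_contra hxK
    -- S is nonempty
    have hsph : (Metric.sphere (0 : EuclideanSpace ℝ (Fin 2)) 1).Nonempty := by
      rw [NormedSpace.sphere_nonempty]; norm_num
    obtain ⟨p, hp⟩ := hsph
    have hSne : S.Nonempty := by
      by_contra h
      rw [not_nonempty_iff_eq_empty] at h
      have := hSdense hp
      simp [h] at this
    obtain ⟨v₁, hv₁⟩ := hSne
    -- K₁ is nonempty
    obtain ⟨k₁, hk₁, t₁, hxt₁⟩ := mem_iInter₂.1 hx v₁ hv₁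
    -- bound on K₁
    obtain ⟨M, hM⟩ := isBounded_iff_forall_norm_le.1 hK₁cpt.isBounded
    have hM0 : 0 ≤ M := le_trans (norm_nonneg k₁) (hM k₁ hk₁)
    -- separation
    obtain ⟨f, u, hfu, hux⟩ :=
      geometric_hahn_banach_closed_point hK₁conv hK₁cpt.isClosed hxK
    -- a nonzero kernel vector
    have hker : ∃ w : EuclideanSpace ℝ (Fin 2), w ≠ 0 ∧ f w = 0 := by
      by_contra h
      push_neg at h
      have hinj : Function.Injective f := by
        intro a b hab
        by_contra hne
        exact h (a - b) (sub_ne_zero.2 hne) (by simp [map_sub, hab])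
      have h2 : Module.finrank ℝ (EuclideanSpace ℝ (Fin 2)) ≤ Module.finrank ℝ ℝ :=
        LinearMap.finrank_le_finrank_of_injective (f := f.toLinearMap) hinj
      simp [finrank_euclideanSpace_fin] at h2
    obtain ⟨w, hw0, hfw⟩ := hker
    set v₀ : EuclideanSpace ℝ (Fin 2) := ‖w‖⁻¹ • w with hv₀def
    have hnw : ‖w‖ ≠ 0 := norm_ne_zero_iff.2 hw0
    have hv₀norm : ‖v₀‖ = 1 := by
      rw [hv₀def, norm_smul, norm_inv, norm_norm, inv_mul_cancel₀ hnw]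
    have hfv₀ : f v₀ = 0 := by rw [hv₀def, map_smul, hfw, smul_zero]
    have hv₀sph : v₀ ∈ Metric.sphere (0 : EuclideanSpace ℝ (Fin 2)) 1 :=
      mem_sphere_zero_iff_norm.2 hv₀norm
    -- quantities
    set C : ℝ := ‖x‖ + M + 1 with hCdef
    have hC0 : 0 < C := by positivity
    have hux' : 0 < f x - u := sub_pos.2 hux
    set ε₀ : ℝ := (f x - u) / C with hε₀def
    have hε₀0 : 0 < ε₀ := div_pos hux' hC0
    -- choose v ∈ S close to v₀
    have hv₀cl : v₀ ∈ closure S := hSdense hv₀sph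
    obtain ⟨v, hvS, hvd⟩ := Metric.mem_closure_iff.1 hv₀cl (ε₀ / (‖f‖ + 1))
      (by positivity)
    have hfv : |f v| < ε₀ := by
      have h1 : f v = f (v - v₀) := by rw [map_sub, hfv₀, sub_zero]
      have h2 : |f (v - v₀)| ≤ ‖f‖ * ‖v - v₀‖ := by
        simpa using f.le_opNorm (v - v₀)
      have h3 : ‖v - v₀‖ < ε₀ / (‖f‖ + 1) := by
        rw [← dist_eq_norm]
        rw [dist_comm]
        exact hvd
      have hf0 : (0:ℝ) ≤ ‖f‖ := norm_nonneg f
      calc |f v| = |f (v - v₀)| := by rw [h1]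
        _ ≤ ‖f‖ * ‖v - v₀‖ := h2
        _ ≤ ‖f‖ * (ε₀ / (‖f‖ + 1)) := by
            apply mul_le_mul_of_nonneg_left (le_of_lt h3) hf0
        _ < ε₀ := by
            rw [div_eq_inv_mul, ← mul_assoc]
            have : ‖f‖ * (‖f‖ + 1)⁻¹ < 1 := by
              rw [mul_inv_lt_iff₀ (by positivity)]
              linarith
            nlinarith
    -- unpack membership in the cylinder at v
    obtain ⟨k, hk, t, hxe⟩ := mem_iInter₂.1 hx v hvS
    have hvnorm : ‖v‖ = 1 := mem_sphere_zero_iff_norm.1 (hSsub hvS)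
    have htbound : |t| ≤ ‖x‖ + M := by
      have : ‖t • v‖ = ‖x - k‖ := by rw [hxe]; congr 1; abel
      rw [norm_smul, hvnorm, mul_one, Real.norm_eq_abs] at this
      have h4 : ‖x - k‖ ≤ ‖x‖ + ‖k‖ := norm_sub_le x k
      have h5 := hM k hk
      linarith
    have hfx : f x = f k + t * f v := by
      rw [hxe, map_add, map_smul, smul_eq_mul]
    have hfk : f k < u := hfu k hk
    have h6 : t * f v ≤ |t| * |f v| := by
      calc t * f v ≤ |t * f v| := le_abs_self _
        _ = |t| * |f v| := abs_mul t (f v)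
    have h7 : |t| * |f v| ≤ C * |f v| := by
      apply mul_le_mul_of_nonneg_right _ (abs_nonneg _)
      rw [hCdef]; linarith
    have h8 : C * |f v| < C * ε₀ := by
      exact mul_lt_mul_of_pos_left hfv hC0
    have h9 : C * ε₀ = f x - u := by
      rw [hε₀def, mul_div_cancel₀ _ (ne_of_gt hC0)]
    linarith
end

section
/- Let h : ℝ² → ℝ be continuous with compact support, and define the transversal gauge A_T(x) := −x × ∫₀¹ τ h(τx) dτ, where for a scalar s ∈ ℝ and w ∈ ℝ², w × s := (s w₂, −s w₁). If h is C¹, then A_T is C¹ on ℝ² and ∂₁(A_T)₂ − ∂₂(A_T)₁ = h on ℝ². -/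
open MeasureTheory

/-- The transversal gauge `A_T(x) := −x × ∫₀¹ τ h(τx) dτ`, where for `w ∈ ℝ²`, `s ∈ ℝ`,
`w × s := (s w₂, −s w₁)`; explicitly `A_T(x) = (−s x₂, s x₁)` with `s = ∫₀¹ τ h(τx) dτ`. -/
noncomputable def transversalGauge (h : (Fin 2 → ℝ) → ℝ) (x : Fin 2 → ℝ) : Fin 2 → ℝ :=
  ![-(∫ τ in (0:ℝ)..1, τ * h (τ • x)) * x 1, (∫ τ in (0:ℝ)..1, τ * h (τ • x)) * x 0]

set_option maxHeartbeats 2000000 in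
/-- for `h` continuous with compact support and `C¹`, the transversal gauge
`A_T` is `C¹` on `ℝ²` and `∂₁(A_T)₂ − ∂₂(A_T)₁ = h`. -/
theorem stmt12 (h : (Fin 2 → ℝ) → ℝ) (hc : Continuous h) (hsupp : HasCompactSupport h)
    (hC1 : ContDiff ℝ 1 h) :
    ContDiff ℝ 1 (transversalGauge h) ∧
    ∀ x : Fin 2 → ℝ,
      fderiv ℝ (fun y => transversalGauge h y 1) x (Pi.single 0 1)
        - fderiv ℝ (fun y => transversalGauge h y 0) x (Pi.single 1 1) = h x := by
  have _dummy : True := trivial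
  have hdiff : Differentiable ℝ h := hC1.differentiable one_ne_zero
  have hh'c : Continuous (fderiv ℝ h) := hC1.continuous_fderiv one_ne_zero
  obtain ⟨M, hM⟩ : ∃ M, ∀ x, ‖fderiv ℝ h x‖ ≤ M :=
    (hsupp.fderiv ℝ).exists_bound_of_continuous hh'c
  set S : (Fin 2 → ℝ) → ℝ := fun x => ∫ τ in (0:ℝ)..1, τ * h (τ • x) with hSdef
  set F' : (Fin 2 → ℝ) → ℝ → ((Fin 2 → ℝ) →L[ℝ] ℝ) := fun x τ =>
    τ • ((fderiv ℝ h (τ • x)).comp (τ • ContinuousLinearMap.id ℝ (Fin 2 → ℝ))) with hF'def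
  set S' : (Fin 2 → ℝ) → ((Fin 2 → ℝ) →L[ℝ] ℝ) := fun x => ∫ τ in (0:ℝ)..1, F' x τ with hS'def
  -- pointwise differentiability of the integrand
  have hFdiff : ∀ (τ : ℝ) (x : Fin 2 → ℝ),
      HasFDerivAt (fun y : Fin 2 → ℝ => τ * h (τ • y)) (F' x τ) x := by
    intro τ x
    have h1 : HasFDerivAt (fun y : Fin 2 → ℝ => τ • y) (τ • ContinuousLinearMap.id ℝ (Fin 2 → ℝ)) x :=
      (hasFDerivAt_id x).const_smul τ
    have h2 := ((hdiff (τ • x)).hasFDerivAt).comp x h1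
    exact h2.const_mul τ
  have hcont_uncurry : Continuous (Function.uncurry F') := by
    apply Continuous.smul continuous_snd
    exact (hh'c.comp ((continuous_snd.smul continuous_fst))).clm_comp
      (continuous_snd.smul continuous_const)
  have hF'cont : ∀ x : Fin 2 → ℝ, Continuous fun τ => F' x τ := fun x =>
    hcont_uncurry.comp (Continuous.prodMk_right x)
  have hS : ∀ x : Fin 2 → ℝ, HasFDerivAt S (S' x) x := by
    intro x
    apply intervalIntegral.hasFDerivAt_integral_of_dominated_of_fderiv_le
      (F' := F') (bound := fun _ => 1 * (M * 1)) (s := Metric.ball x 1) (Metric.ball_mem_nhds x one_pos)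
    · filter_upwards with y
      exact ((continuous_id.mul (hc.comp (continuous_id.smul continuous_const)))).aestronglyMeasurable
    · exact ((continuous_id.mul (hc.comp (continuous_id.smul continuous_const)))).intervalIntegrable 0 1
    · exact (hF'cont x).aestronglyMeasurable
    · filter_upwards with τ hτ y _
      have hτ1 : |τ| ≤ 1 := by
        rw [Set.uIoc_of_le (by norm_num : (0:ℝ) ≤ 1)] at hτ
        rw [abs_le]; constructor <;> [linarith [hτ.1]; linarith [hτ.2]]
      have h4 : (0:ℝ) ≤ M := le_trans (norm_nonneg _) (hM 0)
      refine ContinuousLinearMap.opNorm_le_bound _ (by positivity) ?_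
      intro v
      have hev : F' y τ v = τ * (fderiv ℝ h (τ • y) (τ • v)) := by
        simp [hF'def]
      rw [hev]
      calc ‖τ * (fderiv ℝ h (τ • y) (τ • v))‖
          = |τ| * ‖fderiv ℝ h (τ • y) (τ • v)‖ := by
            rw [Real.norm_eq_abs, Real.norm_eq_abs, abs_mul]
        _ ≤ 1 * (‖fderiv ℝ h (τ • y)‖ * ‖τ • v‖) := by
            gcongr
            exact (fderiv ℝ h (τ • y)).le_opNorm (τ • v)
        _ = ‖fderiv ℝ h (τ • y)‖ * (|τ| * ‖v‖) := by
            rw [norm_smul, Real.norm_eq_abs]; ring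
        _ ≤ M * (1 * ‖v‖) := by gcongr; exact hM _
        _ = 1 * (M * 1) * ‖v‖ := by ring
    · exact intervalIntegrable_const
    · filter_upwards with τ _ y _
      exact hFdiff τ y
  have hfderivS : fderiv ℝ S = S' := funext fun x => (hS x).fderiv
  have hScont : Continuous S' := by
    exact intervalIntegral.continuous_parametric_intervalIntegral_of_continuous'
      hcont_uncurry 0 1
  have hSC1 : ContDiff ℝ 1 S := by
    rw [contDiff_one_iff_fderiv]
    exact ⟨fun x => (hS x).differentiableAt, by rw [hfderivS]; exact hScont⟩
  have hSc : Continuous S := hSC1.continuous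
  -- the two components
  have hcomp1 : ∀ y : Fin 2 → ℝ, transversalGauge h y 1 = S y * y 0 := by
    intro y; simp [transversalGauge, hSdef]
  have hcomp0 : ∀ y : Fin 2 → ℝ, transversalGauge h y 0 = -(S y * y 1) := by
    intro y; simp [transversalGauge, hSdef]
  have hproj : ∀ i : Fin 2, ContDiff ℝ 1 (fun y : Fin 2 → ℝ => y i) := fun i =>
    (ContinuousLinearMap.proj i (R := ℝ) (φ := fun _ : Fin 2 => ℝ)).contDiff
  constructor
  · rw [contDiff_pi]
    intro i
    fin_cases i
    · show ContDiff ℝ 1 fun x : Fin 2 → ℝ => transversalGauge h x 0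
      rw [show (fun x : Fin 2 → ℝ => transversalGauge h x 0) = fun x => -(S x * x 1) from
        funext hcomp0]
      exact (hSC1.mul (hproj 1)).neg
    · show ContDiff ℝ 1 fun x : Fin 2 → ℝ => transversalGauge h x 1
      rw [show (fun x : Fin 2 → ℝ => transversalGauge h x 1) = fun x => S x * x 0 from
        funext hcomp1]
      exact hSC1.mul (hproj 0)
  · intro x
    -- derivatives of the components
    have hd1 : HasFDerivAt (fun y => transversalGauge h y 1)
        (S x • (ContinuousLinearMap.proj 0 (R := ℝ) (φ := fun _ : Fin 2 => ℝ))
          + x 0 • S' x) x := by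
      have := (hS x).mul ((ContinuousLinearMap.proj 0 (R := ℝ)
        (φ := fun _ : Fin 2 => ℝ)).hasFDerivAt (x := x))
      exact this.congr_of_eventuallyEq (Filter.Eventually.of_forall fun y => (hcomp1 y))
    have hd0 : HasFDerivAt (fun y => transversalGauge h y 0)
        (-(S x • (ContinuousLinearMap.proj 1 (R := ℝ) (φ := fun _ : Fin 2 => ℝ))
          + x 1 • S' x)) x := by
      have := ((hS x).mul ((ContinuousLinearMap.proj 1 (R := ℝ)
        (φ := fun _ : Fin 2 => ℝ)).hasFDerivAt (x := x))).neg
      exact this.congr_of_eventuallyEq (Filter.Eventually.of_forall fun y => (hcomp0 y))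
    rw [hd1.fderiv, hd0.fderiv]
    simp only [ContinuousLinearMap.add_apply, ContinuousLinearMap.smul_apply,
      ContinuousLinearMap.neg_apply, ContinuousLinearMap.proj_apply,
      Pi.single_eq_same, Pi.single_eq_of_ne (by decide : (1:Fin 2) ≠ 0),
      Pi.single_eq_of_ne (by decide : (0:Fin 2) ≠ 1), smul_eq_mul]
    -- now goal should be arithmetic identity in terms of S x and S' x applied
    have hxdecomp : (x : Fin 2 → ℝ) = x 0 • (Pi.single 0 1 : Fin 2 → ℝ) + x 1 • (Pi.single 1 1 : Fin 2 → ℝ) := by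
      funext i; fin_cases i <;> simp
    have hlin : x 0 * S' x (Pi.single 0 1) + x 1 * S' x (Pi.single 1 1) = S' x x := by
      have h5 := congrArg (S' x) hxdecomp
      rw [map_add, _root_.map_smul, _root_.map_smul] at h5
      rw [h5]; simp [smul_eq_mul]
    -- key integral identity
    have hint : 2 * S x + S' x x = h x := by
      have happ : S' x x = ∫ τ in (0:ℝ)..1, τ * (τ * (fderiv ℝ h (τ • x) x)) := by
        rw [hS'def]
        rw [ContinuousLinearMap.intervalIntegral_apply
          ((hF'cont x).intervalIntegrable 0 1) x]
        congr 1; funext τ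
        simp only [hF'def, ContinuousLinearMap.smul_apply, ContinuousLinearMap.comp_apply,
          ContinuousLinearMap.id_apply, _root_.map_smul, smul_eq_mul]
      have hcont1 : Continuous fun τ : ℝ => 2 * (τ * h (τ • x)) :=
        continuous_const.mul (continuous_id.mul (hc.comp (continuous_id.smul continuous_const)))
      have hcont2 : Continuous fun τ : ℝ => τ * (τ * (fderiv ℝ h (τ • x) x)) := by
        apply continuous_id.mul
        apply continuous_id.mul
        exact (hh'c.comp (continuous_id.smul continuous_const)).clm_apply continuous_const
      have h2S : 2 * S x = ∫ τ in (0:ℝ)..1, 2 * (τ * h (τ • x)) := by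
        rw [hSdef, ← intervalIntegral.integral_const_mul]
      rw [h2S, happ, ← intervalIntegral.integral_add
        (hcont1.intervalIntegrable 0 1) (hcont2.intervalIntegrable 0 1)]
      have hderiv : ∀ τ ∈ Set.uIcc (0:ℝ) 1,
          HasDerivAt (fun τ : ℝ => τ ^ 2 * h (τ • x))
            (2 * (τ * h (τ • x)) + τ * (τ * (fderiv ℝ h (τ • x) x))) τ := by
        intro τ _
        have hsm : HasDerivAt (fun τ : ℝ => τ • x) x τ := by
          simpa using (hasDerivAt_id τ).smul_const x
        have hh : HasDerivAt (fun τ : ℝ => h (τ • x)) (fderiv ℝ h (τ • x) x) τ :=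
          (hdiff (τ • x)).hasFDerivAt.comp_hasDerivAt τ hsm
        have hp : HasDerivAt (fun τ : ℝ => τ ^ 2) (2 * τ) τ := by
          simpa using hasDerivAt_pow 2 τ
        have := hp.mul hh
        exact this.congr_deriv (by ring)
      have := intervalIntegral.integral_eq_sub_of_hasDerivAt hderiv
        ((hcont1.add hcont2).intervalIntegrable 0 1)
      rw [this]
      simp
    linarith [hint, hlin]
end

section
/- Let v̂ ∈ 𝕊¹ and let B : ℝ² → ℝ be continuous with |B(x)| ≤ C(1+|x|)^{-μ} for some μ > 2. For x ∈ ℝ² define η(x) := ∫_{−∞}^{∞} B(x + τ v̂) dτ. Then η is well-defined (the integral converges absolutely), η is continuous, η(x + s v̂) = η(x) for all s ∈ ℝ, and |η(x)| ≤ C' (1 + |x − (x·v̂)v̂|)^{1−μ} for some constant C'. -/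
open MeasureTheory

private lemma aux_half_rpow {μ s t : ℝ} (hs : 0 < s) (hst : s ≤ 2 * t) (hμ : 0 ≤ μ) :
    t ^ (-μ) ≤ 2 ^ μ * s ^ (-μ) := by
  have ht : (0:ℝ) < s / 2 := by linarith
  have h1 : t ^ (-μ) ≤ (s / 2) ^ (-μ) :=
    Real.rpow_le_rpow_of_nonpos ht (by linarith) (by linarith)
  have h2 : (s / 2 : ℝ) ^ (-μ) = 2 ^ μ * s ^ (-μ) := by
    rw [Real.div_rpow hs.le (by norm_num), Real.rpow_neg (by norm_num : (0:ℝ) ≤ 2)]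
    field_simp
  linarith [h1, h2.le]

/-- for `v̂ ∈ 𝕊¹` and `B` continuous with `|B(x)| ≤ C(1+|x|)^{-μ}`, `μ > 2`,
the X-ray transform `η(x) := ∫_{-∞}^{∞} B(x + τv̂) dτ` is well defined (absolutely
convergent), continuous, invariant along `v̂`, and satisfies
`|η(x)| ≤ C' (1 + |x − (x·v̂)v̂|)^{1−μ}`. -/
theorem stmt14 (v : EuclideanSpace ℝ (Fin 2)) (hv : ‖v‖ = 1)
    (B : EuclideanSpace ℝ (Fin 2) → ℝ) (hBc : Continuous B)
    (C μ : ℝ) (hμ : 2 < μ) (hB : ∀ x, |B x| ≤ C * (1 + ‖x‖) ^ (-μ)) :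
    (∀ x : EuclideanSpace ℝ (Fin 2), Integrable (fun τ : ℝ => B (x + τ • v))) ∧
    Continuous (fun x : EuclideanSpace ℝ (Fin 2) => ∫ τ : ℝ, B (x + τ • v)) ∧
    (∀ (x : EuclideanSpace ℝ (Fin 2)) (s : ℝ),
      (∫ τ : ℝ, B ((x + s • v) + τ • v)) = ∫ τ : ℝ, B (x + τ • v)) ∧
    ∃ C' : ℝ, 0 < C' ∧ ∀ x : EuclideanSpace ℝ (Fin 2),
      |∫ τ : ℝ, B (x + τ • v)| ≤ C' * (1 + ‖x - (inner ℝ x v : ℝ) • v‖) ^ (1 - μ) := by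
  have hμ0 : (0:ℝ) ≤ μ := by linarith
  have hC : 0 ≤ C := by
    have h := hB 0
    simp [Real.one_rpow] at h
    exact le_trans (abs_nonneg _) h
  have hvv : (inner ℝ v v : ℝ) = 1 := by
    rw [real_inner_self_eq_norm_sq, hv]; norm_num
  have hinner : ∀ (x : EuclideanSpace ℝ (Fin 2)) (τ : ℝ),
      (inner ℝ (x + τ • v) v : ℝ) = (inner ℝ x v : ℝ) + τ := by
    intro x τ
    rw [inner_add_left, real_inner_smul_left, hvv, mul_one]
  have hlow1 : ∀ (x : EuclideanSpace ℝ (Fin 2)) (τ : ℝ),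
      |(inner ℝ x v : ℝ) + τ| ≤ ‖x + τ • v‖ := by
    intro x τ
    have := abs_real_inner_le_norm (x + τ • v) v
    rwa [hinner, hv, mul_one] at this
  have hproj : ∀ y : EuclideanSpace ℝ (Fin 2), ‖y - (inner ℝ y v : ℝ) • v‖ ≤ ‖y‖ := by
    intro y
    have hsq : ‖y - (inner ℝ y v : ℝ) • v‖ ^ 2 ≤ ‖y‖ ^ 2 := by
      rw [norm_sub_sq_real, real_inner_smul_right, norm_smul, Real.norm_eq_abs, hv, mul_one,
        sq_abs]
      nlinarith [sq_nonneg (inner ℝ y v : ℝ)]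
    nlinarith [norm_nonneg (y - (inner ℝ y v : ℝ) • v), norm_nonneg y]
  have hperp : ∀ (x : EuclideanSpace ℝ (Fin 2)) (τ : ℝ),
      ‖x - (inner ℝ x v : ℝ) • v‖ ≤ ‖x + τ • v‖ := by
    intro x τ
    have h1 : x - (inner ℝ x v : ℝ) • v
        = (x + τ • v) - (inner ℝ (x + τ • v) v : ℝ) • v := by
      rw [hinner, add_smul]; abel
    rw [h1]; exact hproj _
  -- integrable model
  have hI1 : Integrable (fun t : ℝ => (1 + |t|) ^ (-μ)) := by
    have h := integrable_one_add_norm (E := ℝ) (μ := volume) (r := μ) (by simp; linarith)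
    simpa [Real.norm_eq_abs] using h
  have hI1pos : ∀ t : ℝ, (0:ℝ) < (1 + |t|) ^ (-μ) :=
    fun t => Real.rpow_pos_of_pos (by positivity) _
  -- basic pointwise bound
  have hpt : ∀ (x : EuclideanSpace ℝ (Fin 2)) (τ : ℝ),
      |B (x + τ • v)| ≤ C * (1 + |(inner ℝ x v : ℝ) + τ|) ^ (-μ) := by
    intro x τ
    refine (hB _).trans (mul_le_mul_of_nonneg_left ?_ hC)
    exact Real.rpow_le_rpow_of_nonpos (by positivity) (by linarith [hlow1 x τ]) (by linarith)
  -- integrability of translated model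
  have hItr : ∀ b : ℝ, Integrable (fun τ : ℝ => C * (1 + |b + τ|) ^ (-μ)) := by
    intro b
    exact (hI1.comp_add_left b).const_mul C
  have hmeas : ∀ x : EuclideanSpace ℝ (Fin 2),
      AEStronglyMeasurable (fun τ : ℝ => B (x + τ • v)) volume := by
    intro x
    exact (hBc.comp (continuous_const.add (continuous_id.smul continuous_const))).aestronglyMeasurable
  -- Part 1
  have hint : ∀ x : EuclideanSpace ℝ (Fin 2), Integrable (fun τ : ℝ => B (x + τ • v)) := by
    intro x
    refine (hItr (inner ℝ x v : ℝ)).mono' (hmeas x) ?_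
    filter_upwards with τ
    simpa [Real.norm_eq_abs] using hpt x τ
  refine ⟨hint, ?_, ?_, ?_⟩
  · -- Part 2: continuity
    rw [continuous_iff_continuousAt]
    intro x₀
    refine continuousAt_of_dominated (bound := fun τ : ℝ => C * 2 ^ μ * (1 + |(inner ℝ x₀ v : ℝ) + τ|) ^ (-μ))
      (Filter.Eventually.of_forall fun x => hmeas x) ?_ ?_ ?_
    · filter_upwards [Metric.ball_mem_nhds x₀ one_pos] with x hx
      filter_upwards with τ
      have hd : |(inner ℝ x v : ℝ) - (inner ℝ x₀ v : ℝ)| ≤ 1 := by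
        have : (inner ℝ x v : ℝ) - (inner ℝ x₀ v : ℝ) = inner ℝ (x - x₀) v := by
          rw [inner_sub_left]
        rw [this]
        have h2 := abs_real_inner_le_norm (x - x₀) v
        rw [hv, mul_one] at h2
        have : ‖x - x₀‖ < 1 := by simpa [dist_eq_norm] using hx
        linarith
      have key : (1 + |(inner ℝ x v : ℝ) + τ|) ^ (-μ)
          ≤ 2 ^ μ * (1 + |(inner ℝ x₀ v : ℝ) + τ|) ^ (-μ) := by
        refine aux_half_rpow (by positivity) ?_ hμ0
        have := abs_sub_abs_le_abs_sub ((inner ℝ x₀ v : ℝ) + τ) ((inner ℝ x v : ℝ) + τ)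
        have h3 : |(inner ℝ x₀ v : ℝ) + τ - ((inner ℝ x v : ℝ) + τ)| ≤ 1 := by
          rw [show (inner ℝ x₀ v : ℝ) + τ - ((inner ℝ x v : ℝ) + τ) = -((inner ℝ x v : ℝ) - (inner ℝ x₀ v : ℝ)) by ring, abs_neg]
          exact hd
        linarith [abs_nonneg ((inner ℝ x v : ℝ) + τ)]
      calc ‖B (x + τ • v)‖ = |B (x + τ • v)| := Real.norm_eq_abs _
        _ ≤ C * (1 + |(inner ℝ x v : ℝ) + τ|) ^ (-μ) := hpt x τ
        _ ≤ C * (2 ^ μ * (1 + |(inner ℝ x₀ v : ℝ) + τ|) ^ (-μ)) :=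
            mul_le_mul_of_nonneg_left key hC
        _ = C * 2 ^ μ * (1 + |(inner ℝ x₀ v : ℝ) + τ|) ^ (-μ) := by ring
    · exact ((hI1.comp_add_left _).const_mul (C * 2 ^ μ)).congr (by
        filter_upwards with τ; ring)
    · filter_upwards with τ
      exact (hBc.comp (continuous_id.add continuous_const)).continuousAt
  · -- Part 3: invariance
    intro x s
    have h : ∀ τ : ℝ, (x + s • v) + τ • v = x + (s + τ) • v := by
      intro τ; rw [add_smul]; abel
    simp_rw [h]
    exact integral_add_left_eq_self (fun t : ℝ => B (x + t • v)) s
  · -- Part 4: decay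
    set K : ℝ := ∫ t : ℝ, (1 + |t|) ^ (-μ) with hK
    have hKpos : 0 < K := by
      rw [hK, integral_pos_iff_support_of_nonneg (fun t => (hI1pos t).le) hI1]
      have : Function.support (fun t : ℝ => (1 + |t|) ^ (-μ)) = Set.univ := by
        ext t; simp [Function.mem_support, (hI1pos t).ne']
      rw [this]
      simp
    refine ⟨(C + 1) * 2 ^ μ * K, by positivity, fun x => ?_⟩
    set a : ℝ := (inner ℝ x v : ℝ) with hadef
    set P : ℝ := ‖x - a • v‖ with hP
    have hP0 : 0 ≤ P := norm_nonneg _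
    -- pointwise refined bound
    have hpt2 : ∀ τ : ℝ, |B (x + τ • v)| ≤ C * 2 ^ μ * ((1 + P) + |a + τ|) ^ (-μ) := by
      intro τ
      have key : (1 + ‖x + τ • v‖) ^ (-μ) ≤ 2 ^ μ * ((1 + P) + |a + τ|) ^ (-μ) := by
        refine aux_half_rpow (by positivity) ?_ hμ0
        have h1 := hperp x τ
        have h2 := hlow1 x τ
        rw [← hP] at h1
        rw [← hadef] at h2
        linarith
      calc |B (x + τ • v)| ≤ C * (1 + ‖x + τ • v‖) ^ (-μ) := hB _
        _ ≤ C * (2 ^ μ * ((1 + P) + |a + τ|) ^ (-μ)) := mul_le_mul_of_nonneg_left key hC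
        _ = C * 2 ^ μ * ((1 + P) + |a + τ|) ^ (-μ) := by ring
    -- integrability of refined bound
    have hImodel : Integrable (fun t : ℝ => ((1 + P) + |t|) ^ (-μ)) := by
      refine hI1.mono' ?_ ?_
      · exact ((continuous_const.add continuous_abs).rpow_const
          (fun t => Or.inl (ne_of_gt (by linarith [abs_nonneg t] : (0:ℝ) < 1 + P + |t|)))).aestronglyMeasurable
      · filter_upwards with t
        rw [Real.norm_eq_abs, abs_of_pos (Real.rpow_pos_of_pos (by linarith [abs_nonneg t] : (0:ℝ) < 1 + P + |t|) _)]
        exact Real.rpow_le_rpow_of_nonpos (by positivity) (by linarith [abs_nonneg t]) (by linarith)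
    have hIref : Integrable (fun τ : ℝ => C * 2 ^ μ * ((1 + P) + |a + τ|) ^ (-μ)) :=
      (hImodel.comp_add_left a).const_mul _
    -- scaling identity
    have hscale : ∫ t : ℝ, ((1 + P) + |t|) ^ (-μ) = (1 + P) ^ (1 - μ) * K := by
      have hc : (0:ℝ) < 1 + P := by linarith
      have heq : ∀ t : ℝ, ((1 + P) + |t|) ^ (-μ)
          = (1 + P) ^ (-μ) * (1 + |(1 + P)⁻¹ * t|) ^ (-μ) := by
        intro t
        rw [← Real.mul_rpow hc.le (by positivity)]
        congr 1
        rw [abs_mul, abs_of_pos (inv_pos.mpr hc)]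
        field_simp
      simp_rw [heq]
      rw [integral_const_mul, Measure.integral_comp_inv_mul_left (fun s : ℝ => (1 + |s|) ^ (-μ)) (1 + P),
        abs_of_pos hc, smul_eq_mul, ← mul_assoc, ← Real.rpow_add_one hc.ne']
      rw [show -μ + 1 = 1 - μ by ring]
    calc |∫ τ : ℝ, B (x + τ • v)| ≤ ∫ τ : ℝ, |B (x + τ • v)| := by
          simpa [Real.norm_eq_abs] using norm_integral_le_integral_norm (fun τ : ℝ => B (x + τ • v))
      _ ≤ ∫ τ : ℝ, C * 2 ^ μ * ((1 + P) + |a + τ|) ^ (-μ) :=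
          integral_mono (hint x).abs hIref hpt2
      _ = C * 2 ^ μ * ∫ τ : ℝ, ((1 + P) + |a + τ|) ^ (-μ) := integral_const_mul _ _
      _ = C * 2 ^ μ * ∫ t : ℝ, ((1 + P) + |t|) ^ (-μ) := by
          rw [integral_add_left_eq_self (fun t : ℝ => ((1 + P) + |t|) ^ (-μ)) a]
      _ = C * 2 ^ μ * ((1 + P) ^ (1 - μ) * K) := by rw [hscale]
      _ ≤ (C + 1) * 2 ^ μ * K * (1 + P) ^ (1 - μ) := by
          have h1 : (0:ℝ) < (1 + P) ^ (1 - μ) := Real.rpow_pos_of_pos (by linarith) _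
          have h2 : (0:ℝ) < (2:ℝ) ^ μ := Real.rpow_pos_of_pos two_pos _
          nlinarith [mul_pos (mul_pos h2 hKpos) h1]
end
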